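/- (Theorem 1, termination criterion) Let y₀ ∈ ℝ, b > 0, ε > 0, and let p : ℝ → ℝ be strictly decreasing and strictly positive on [y₀, ∞). Suppose the least natural number N with S_l(ε,N) ≥ b exists and equals n₂¹, and for an integer j ≥ 2 the least N with S_l(ε/j,N) ≥ b exists, equals n₂, and satisfies n₂ > j. If j ≥ 1 + (1/2)·((p(y₀) − p(y₀ + ε·n₂¹ − ε))/p(y₀ + ε·n₂¹)), then the stopping test holds: S_t(ε/j, n₂ − j) ≤ b. -/

import Mathlib

open Set Finset

/-- Lower rectangular sum: S_l(h,N) = ∑_{i=1}^{N} h·p(y₀ + i·h). -/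
noncomputable def lowerSum (p : ℝ → ℝ) (y₀ h : ℝ) (N : ℕ) : ℝ :=
  ∑ i ∈ Finset.Icc 1 N, h * p (y₀ + (i : ℝ) * h)

/-- Trapezoidal sum: S_t(h,N) = ∑_{i=1}^{N} (h/2)·(p(y₀+(i−1)·h) + p(y₀+i·h)). -/
noncomputable def trapSum (p : ℝ → ℝ) (y₀ h : ℝ) (N : ℕ) : ℝ :=
  ∑ i ∈ Finset.Icc 1 N, (h / 2) * (p (y₀ + ((i : ℝ) - 1) * h) + p (y₀ + (i : ℝ) * h))

lemma lowerSum_Ioc (p : ℝ → ℝ) (y₀ h : ℝ) (N : ℕ) :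
    lowerSum p y₀ h N = ∑ i ∈ Finset.Ioc 0 N, h * p (y₀ + (i : ℝ) * h) := by
  rw [lowerSum, ← Finset.Icc_add_one_left_eq_Ioc, Nat.zero_add]

lemma trap_eq (p : ℝ → ℝ) (y₀ h : ℝ) (N : ℕ) :
    trapSum p y₀ h N = lowerSum p y₀ h N + (h / 2) * (p y₀ - p (y₀ + (N : ℝ) * h)) := by
  induction N with
  | zero => simp [trapSum, lowerSum]
  | succ N ih =>
    rw [trapSum, lowerSum, Finset.sum_Icc_succ_top (by omega : 1 ≤ N + 1),
      Finset.sum_Icc_succ_top (by omega : 1 ≤ N + 1), ← trapSum, ← lowerSum, ih]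
    push_cast
    ring_nf

set_option maxHeartbeats 1000000 in
theorem stmt_12 (y₀ b ε : ℝ) (hb : 0 < b) (hε : 0 < ε)
    (p : ℝ → ℝ)
    (hanti : StrictAntiOn p (Set.Ici y₀))
    (hpos : ∀ y ∈ Set.Ici y₀, 0 < p y)
    (n₂₁ : ℕ) (h₁ : IsLeast {N : ℕ | b ≤ lowerSum p y₀ ε N} n₂₁)
    (j : ℕ) (hj : 2 ≤ j)
    (n₂ : ℕ) (h₂ : IsLeast {N : ℕ | b ≤ lowerSum p y₀ (ε / (j : ℝ)) N} n₂)
    (hn₂ : j < n₂)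
    (hcrit : (j : ℝ) ≥ 1 + (1 / 2) *
      ((p y₀ - p (y₀ + ε * (n₂₁ : ℝ) - ε)) / p (y₀ + ε * (n₂₁ : ℝ)))) :
    trapSum p y₀ (ε / (j : ℝ)) (n₂ - j) ≤ b := by
  set h : ℝ := ε / (j : ℝ) with hh_def
  have hj0 : (0:ℝ) < (j:ℝ) := by exact_mod_cast lt_of_lt_of_le (by norm_num) hj
  have hh : 0 < h := div_pos hε hj0
  have hmono := hanti.antitoneOn
  -- n₂₁ ≥ 1
  have hn₂₁1 : 1 ≤ n₂₁ := by
    by_contra hc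
    push_neg at hc
    interval_cases n₂₁
    have := h₁.1
    simp [lowerSum] at this
    linarith
  -- refinement: lowerSum ε m ≤ lowerSum h (j*m)
  have refine : ∀ m : ℕ, lowerSum p y₀ ε m ≤ lowerSum p y₀ h (j * m) := by
    intro m
    induction m with
    | zero => simp [lowerSum]
    | succ m ih =>
      have hsplit : lowerSum p y₀ h (j * (m+1))
          = lowerSum p y₀ h (j * m) + ∑ i ∈ Finset.Ioc (j*m) (j*(m+1)), h * p (y₀ + (i:ℝ) * h) := by
        rw [lowerSum_Ioc, lowerSum_Ioc, ← Finset.sum_Ioc_consecutive _ (Nat.zero_le (j*m))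
          (Nat.mul_le_mul_left j (by omega))]
      have hsplit' : lowerSum p y₀ ε (m+1) = lowerSum p y₀ ε m + ε * p (y₀ + ((m:ℝ)+1) * ε) := by
        rw [lowerSum, lowerSum, Finset.sum_Icc_succ_top (by omega)]
        push_cast; ring
      rw [hsplit, hsplit']
      have hterm : ∀ i ∈ Finset.Ioc (j*m) (j*(m+1)),
          h * p (y₀ + ((m:ℝ)+1) * ε) ≤ h * p (y₀ + (i:ℝ) * h) := by
        intro i hi
        rw [Finset.mem_Ioc] at hi
        have hile : (i:ℝ) ≤ (j:ℝ) * ((m:ℝ)+1) := by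
          have : (i:ℝ) ≤ ((j*(m+1) : ℕ) : ℝ) := by exact_mod_cast hi.2
          push_cast at this; linarith
        have hih : (i:ℝ) * h ≤ ((m:ℝ)+1) * ε := by
          have : (j:ℝ) * ((m:ℝ)+1) * h = ((m:ℝ)+1) * ε := by
            rw [hh_def]; field_simp
          nlinarith [hh.le]
        have hi0 : 0 ≤ (i:ℝ) * h := by positivity
        have := hmono (by simp [Set.mem_Ici]; linarith : y₀ + (i:ℝ)*h ∈ Set.Ici y₀)
          (by simp [Set.mem_Ici]; nlinarith : y₀ + ((m:ℝ)+1)*ε ∈ Set.Ici y₀)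
          (by linarith)
        nlinarith [hh.le]
      have hsum : ε * p (y₀ + ((m:ℝ)+1) * ε)
          ≤ ∑ i ∈ Finset.Ioc (j*m) (j*(m+1)), h * p (y₀ + (i:ℝ) * h) := by
        calc ε * p (y₀ + ((m:ℝ)+1) * ε)
            = ∑ _i ∈ Finset.Ioc (j*m) (j*(m+1)), h * p (y₀ + ((m:ℝ)+1) * ε) := by
              rw [Finset.sum_const, Nat.card_Ioc]
              have hcard : j*(m+1) - j*m = j := by rw [Nat.mul_succ]; omega
              rw [hcard]
              rw [nsmul_eq_mul]
              rw [hh_def]; field_simp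
          _ ≤ _ := Finset.sum_le_sum hterm
      linarith
  -- n₂ ≤ j * n₂₁
  have hub : n₂ ≤ j * n₂₁ := h₂.2 (le_trans h₁.1 (refine n₂₁))
  set M : ℕ := n₂ - j with hM_def
  have hMj : M + j = n₂ := by omega
  have hMcast : (M:ℝ) = (n₂:ℝ) - (j:ℝ) := by
    have : ((M + j : ℕ):ℝ) = (n₂:ℝ) := by rw [hMj]
    push_cast at this; linarith
  -- lowerSum h (n₂ - 1) < b
  have hlt : lowerSum p y₀ h (n₂ - 1) < b := by
    by_contra hc
    push_neg at hc
    have := h₂.2 hc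
    omega
  -- split n₂-1 = M + (n₂-1-M), with n₂-1-M = j-1
  have hsplit : lowerSum p y₀ h (n₂-1)
      = lowerSum p y₀ h M + ∑ i ∈ Finset.Ioc M (n₂-1), h * p (y₀ + (i:ℝ) * h) := by
    rw [lowerSum_Ioc, lowerSum_Ioc, ← Finset.sum_Ioc_consecutive _ (Nat.zero_le M)
      (by omega : M ≤ n₂ - 1)]
  set P1 : ℝ := p (y₀ + ((n₂:ℝ) - 1) * h) with hP1
  have hP1pos : 0 < P1 := by
    apply hpos
    simp [Set.mem_Ici]
    have : (1:ℝ) ≤ (n₂:ℝ) := by exact_mod_cast Nat.one_le_iff_ne_zero.mpr (by omega)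
    nlinarith [hh.le]
  have hterm2 : ∀ i ∈ Finset.Ioc M (n₂-1), h * P1 ≤ h * p (y₀ + (i:ℝ) * h) := by
    intro i hi
    rw [Finset.mem_Ioc] at hi
    have hile : (i:ℝ) ≤ (n₂:ℝ) - 1 := by
      have : (i:ℝ) ≤ ((n₂ - 1 : ℕ):ℝ) := by exact_mod_cast hi.2
      have hcast : ((n₂ - 1 : ℕ):ℝ) = (n₂:ℝ) - 1 := by
        have : 1 ≤ n₂ := by omega
        push_cast [this]; ring
      linarith
    have hi0 : (0:ℝ) ≤ (i:ℝ) * h := by positivity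
    have hn₂1 : (1:ℝ) ≤ (n₂:ℝ) := by exact_mod_cast Nat.one_le_iff_ne_zero.mpr (by omega)
    have hb0 : (0:ℝ) ≤ ((n₂:ℝ) - 1) * h := mul_nonneg (by linarith) hh.le
    have hab : (i:ℝ) * h ≤ ((n₂:ℝ) - 1) * h := mul_le_mul_of_nonneg_right hile hh.le
    have hmle := hmono (show y₀ + (i:ℝ)*h ∈ Set.Ici y₀ by simp [Set.mem_Ici]; linarith)
      (show y₀ + ((n₂:ℝ)-1)*h ∈ Set.Ici y₀ by simp [Set.mem_Ici]; linarith)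
      (by linarith)
    rw [hP1]
    exact mul_le_mul_of_nonneg_left hmle hh.le
  have hsum2 : ((j:ℝ) - 1) * (h * P1) ≤ ∑ i ∈ Finset.Ioc M (n₂-1), h * p (y₀ + (i:ℝ) * h) := by
    calc ((j:ℝ) - 1) * (h * P1)
        = ∑ _i ∈ Finset.Ioc M (n₂-1), h * P1 := by
          rw [Finset.sum_const, Nat.card_Ioc]
          have hcard : n₂ - 1 - M = j - 1 := by omega
          rw [hcard, nsmul_eq_mul]
          have : ((j - 1 : ℕ):ℝ) = (j:ℝ) - 1 := by
            have : 1 ≤ j := by omega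
            push_cast [this]; ring
          rw [this]
      _ ≤ _ := Finset.sum_le_sum hterm2
  have hSM : lowerSum p y₀ h M < b - ((j:ℝ) - 1) * (h * P1) := by
    have := hsplit ▸ hlt
    linarith
  -- points for criterion
  have hεn : (0:ℝ) ≤ ε * ((n₂₁:ℝ) - 1) := by
    have : (1:ℝ) ≤ (n₂₁:ℝ) := by exact_mod_cast hn₂₁1
    nlinarith
  have hQmem : y₀ + ε * (n₂₁:ℝ) - ε ∈ Set.Ici y₀ := by
    simp [Set.mem_Ici]; nlinarith
  have hQ'mem : y₀ + ε * (n₂₁:ℝ) ∈ Set.Ici y₀ := by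
    simp [Set.mem_Ici]
    have : (1:ℝ) ≤ (n₂₁:ℝ) := by exact_mod_cast hn₂₁1
    nlinarith
  have hQ'pos : 0 < p (y₀ + ε * (n₂₁:ℝ)) := hpos _ hQ'mem
  -- M*h ≤ ε*(n₂₁-1), so p(y₀+M*h) ≥ p(y₀+ε n₂₁ - ε)
  have hMh : (M:ℝ) * h ≤ ε * (n₂₁:ℝ) - ε := by
    have hMle : (M:ℝ) ≤ (j:ℝ) * ((n₂₁:ℝ) - 1) := by
      have : (n₂:ℝ) ≤ (j:ℝ) * (n₂₁:ℝ) := by exact_mod_cast hub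
      rw [hMcast]; nlinarith
    have hjh : (j:ℝ) * h = ε := by rw [hh_def]; field_simp
    nlinarith [hh.le]
  have hpM : p (y₀ + ε * (n₂₁:ℝ) - ε) ≤ p (y₀ + (M:ℝ) * h) := by
    apply hmono (by simp [Set.mem_Ici]; positivity : y₀ + (M:ℝ)*h ∈ Set.Ici y₀) hQmem
    linarith
  -- (n₂-1)*h ≤ ε*n₂₁, so P1 ≥ p(y₀+ε n₂₁)
  have hP1ge : p (y₀ + ε * (n₂₁:ℝ)) ≤ P1 := by
    have hmem : y₀ + ((n₂:ℝ) - 1) * h ∈ Set.Ici y₀ := by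
      have hn₂1 : (1:ℝ) ≤ (n₂:ℝ) := by exact_mod_cast Nat.one_le_iff_ne_zero.mpr (by omega)
      simp [Set.mem_Ici]; nlinarith [hh.le]
    have hle : y₀ + ((n₂:ℝ) - 1) * h ≤ y₀ + ε * (n₂₁:ℝ) := by
      have hn2le : (n₂:ℝ) ≤ (j:ℝ) * (n₂₁:ℝ) := by exact_mod_cast hub
      have hjh : (j:ℝ) * h = ε := by rw [hh_def]; field_simp
      nlinarith [hh.le]
    exact hmono hmem hQ'mem hle
  -- criterion
  have hcrit' : (1/2) * (p y₀ - p (y₀ + ε * (n₂₁:ℝ) - ε)) ≤ ((j:ℝ) - 1) * p (y₀ + ε * (n₂₁:ℝ)) := by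
    have hd : (p y₀ - p (y₀ + ε * (n₂₁:ℝ) - ε)) / p (y₀ + ε * (n₂₁:ℝ)) ≤ 2 * ((j:ℝ) - 1) := by
      linarith [hcrit]
    rw [div_le_iff₀ hQ'pos] at hd
    linarith
  -- finish
  rw [trap_eq]
  have hgap : (h/2) * (p y₀ - p (y₀ + ((M:ℕ):ℝ) * h)) ≤ ((j:ℝ) - 1) * (h * P1) := by
    have h1 : p y₀ - p (y₀ + (M:ℝ) * h) ≤ p y₀ - p (y₀ + ε * (n₂₁:ℝ) - ε) := by linarith
    have h2 : (h/2) * (p y₀ - p (y₀ + (M:ℝ) * h)) ≤ (h/2) * (p y₀ - p (y₀ + ε * (n₂₁:ℝ) - ε)) := by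
      nlinarith [hh.le]
    have h3 : (h/2) * (p y₀ - p (y₀ + ε * (n₂₁:ℝ) - ε)) ≤ h * (((j:ℝ) - 1) * p (y₀ + ε * (n₂₁:ℝ))) := by
      nlinarith [hh.le]
    have hj1 : (1:ℝ) ≤ (j:ℝ) := by exact_mod_cast le_trans (by norm_num) hj
    have h4 : h * (((j:ℝ) - 1) * p (y₀ + ε * (n₂₁:ℝ))) ≤ ((j:ℝ) - 1) * (h * P1) := by
      have h5 : h * p (y₀ + ε * (n₂₁:ℝ)) ≤ h * P1 := mul_le_mul_of_nonneg_left hP1ge hh.le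
      have h6 := mul_le_mul_of_nonneg_left h5 (by linarith : (0:ℝ) ≤ (j:ℝ) - 1)
      calc h * (((j:ℝ) - 1) * p (y₀ + ε * (n₂₁:ℝ)))
          = ((j:ℝ) - 1) * (h * p (y₀ + ε * (n₂₁:ℝ))) := by ring
        _ ≤ ((j:ℝ) - 1) * (h * P1) := h6
    linarith
  linarith
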